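/- Let (u_n) be a sequence of continuous functions on ℙ¹ with ‖u_n‖_{W^{1,2}} ≤ c₁λⁿ and [u_n]_{log^p} ≤ c₂n^q, where p > 1/2, q > 0, 0 < λ < 1, c₁, c₂ > 0. Then there exist constants c > 0 and 0 < τ < 1 (depending only on c₁, c₂, λ, p, q) such that ‖u_n‖_∞ ≤ c τⁿ for every n ≥ 1. -/

import Mathlib

noncomputable section

abbrev P1 := Projectivization ℂ (EuclideanSpace ℂ (Fin 2))

instance : TopologicalSpace P1 :=
  inferInstanceAs (TopologicalSpace
    (Quotient (projectivizationSetoid ℂ (EuclideanSpace ℂ (Fin 2)))))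

/-- The distance `d(x,y) = |det(v,w)|/(‖v‖‖w‖)` on `ℙ¹`. -/
def dP (x y : P1) : ℝ :=
  ‖x.rep 0 * y.rep 1 - x.rep 1 * y.rep 0‖ / (‖x.rep‖ * ‖y.rep‖)

def logStar (t : ℝ) : ℝ := 1 + |Real.log t|

/-- If `(u_n)` are continuous functions on `ℙ¹` with `‖u_n‖_{W^{1,2}} ≤ c₁λⁿ` and
`[u_n]_{log^p} ≤ c₂ n^q` (`p > 1/2`, `q > 0`, `0 < λ < 1`), then `‖u_n‖_∞ ≤ c τⁿ` for some
constants `c > 0`, `0 < τ < 1` depending only on `c₁, c₂, λ, p, q`.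
The `W^{1,2}`-norm of `ℙ¹` enters through its homogeneity and the Moser–Trudinger
consequence: any `u` in the `c₁`-ball of `W^{1,2}` with `[u]_{log^p} ≤ M`, `M ≥ 1`,
satisfies `‖u‖_∞ ≤ A M^{1/(2p)}`. -/
theorem stmt_12 (p q lam c₁ c₂ : ℝ) (hp : 1 / 2 < p) (hq : 0 < q)
    (hlam0 : 0 < lam) (hlam1 : lam < 1) (hc₁ : 0 < c₁) (hc₂ : 0 < c₂)
    (Wnorm : (P1 → ℝ) → ℝ)
    (hW_smul : ∀ (c : ℝ) (u : P1 → ℝ), Wnorm (fun x => c * u x) = |c| * Wnorm u)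
    (A : ℝ) (hA : 0 < A)
    (hkey : ∀ u : P1 → ℝ, Wnorm u ≤ c₁ → ∀ M : ℝ, 1 ≤ M →
      (∀ x y : P1, x ≠ y → |u x - u y| * logStar (dP x y) ^ p ≤ M) →
      ∀ x, |u x| ≤ A * M ^ (1 / (2 * p)))
    (u : ℕ → P1 → ℝ) (hcont : ∀ n, Continuous (u n))
    (hWn : ∀ n : ℕ, 1 ≤ n → Wnorm (u n) ≤ c₁ * lam ^ n)
    (hlogn : ∀ n : ℕ, 1 ≤ n → ∀ x y : P1, x ≠ y →
      |u n x - u n y| * logStar (dP x y) ^ p ≤ c₂ * (n : ℝ) ^ q) :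
    ∃ c > (0 : ℝ), ∃ τ : ℝ, 0 < τ ∧ τ < 1 ∧
      ∀ n : ℕ, 1 ≤ n → ∀ x, |u n x| ≤ c * τ ^ n := by

  set e : ℝ := 1 / (2 * p) with he_def
  have hp0 : 0 < p := lt_trans (by norm_num) hp
  have he0 : 0 < e := by positivity
  have he1 : e < 1 := by
    rw [he_def, div_lt_one (by positivity)]; linarith
  set τ : ℝ := lam ^ ((1 - e) / 2) with hτ_def
  have hτ0 : 0 < τ := Real.rpow_pos_of_pos hlam0 _
  have hτ1 : τ < 1 := Real.rpow_lt_one hlam0.le hlam1 (by linarith)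
  have hlamτ : lam ≤ τ := by
    have := Real.rpow_le_rpow_of_exponent_ge hlam0 hlam1.le
      (show (1 - e) / 2 ≤ 1 by linarith)
    simpa [Real.rpow_one] using this
  set k : ℕ := ⌈q * e⌉₊ with hk_def
  have htend : Filter.Tendsto (fun n : ℕ => (n : ℝ) ^ k * τ ^ n) Filter.atTop (nhds 0) :=
    tendsto_pow_const_mul_const_pow_of_lt_one k hτ0.le hτ1
  obtain ⟨C, hC⟩ := htend.bddAbove_range
  set C' : ℝ := max C 1 with hC'_def
  have hC'1 : (1 : ℝ) ≤ C' := le_max_right _ _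
  have hCb : ∀ n : ℕ, (n : ℝ) ^ k * τ ^ n ≤ C' := fun n =>
    le_trans (hC ⟨n, rfl⟩) (le_max_left _ _)
  refine ⟨A * (1 + c₂ ^ e * C'), by positivity, τ, hτ0, hτ1, ?_⟩
  intro n hn x
  have hlamn : (0 : ℝ) < lam ^ n := pow_pos hlam0 n
  have hn1 : (1 : ℝ) ≤ (n : ℝ) := by exact_mod_cast hn
  have hnq : (0 : ℝ) < (n : ℝ) ^ q := Real.rpow_pos_of_pos (by linarith) q
  set X : ℝ := c₂ * (n : ℝ) ^ q / lam ^ n with hX_def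
  have hX0 : 0 ≤ X := by positivity
  set M : ℝ := max 1 X with hM_def
  have hM1 : (1 : ℝ) ≤ M := le_max_left _ _
  have hWb : Wnorm (fun y => (lam ^ n)⁻¹ * u n y) ≤ c₁ := by
    rw [hW_smul, abs_of_pos (inv_pos.mpr hlamn)]
    calc (lam ^ n)⁻¹ * Wnorm (u n) ≤ (lam ^ n)⁻¹ * (c₁ * lam ^ n) := by
          exact mul_le_mul_of_nonneg_left (hWn n hn) (inv_pos.mpr hlamn).le
      _ = c₁ := by field_simp
  have hSem : ∀ x y : P1, x ≠ y →
      |(lam ^ n)⁻¹ * u n x - (lam ^ n)⁻¹ * u n y| * logStar (dP x y) ^ p ≤ M := by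
    intro x y hxy
    have h1 : |(lam ^ n)⁻¹ * u n x - (lam ^ n)⁻¹ * u n y| * logStar (dP x y) ^ p
        = (lam ^ n)⁻¹ * (|u n x - u n y| * logStar (dP x y) ^ p) := by
      rw [← mul_sub, abs_mul, abs_of_pos (inv_pos.mpr hlamn), mul_assoc]
    rw [h1]
    calc (lam ^ n)⁻¹ * (|u n x - u n y| * logStar (dP x y) ^ p)
        ≤ (lam ^ n)⁻¹ * (c₂ * (n : ℝ) ^ q) :=
          mul_le_mul_of_nonneg_left (hlogn n hn x y hxy) (inv_pos.mpr hlamn).le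
      _ = X := by rw [hX_def]; ring
      _ ≤ M := le_max_right _ _
  have hmain := hkey (fun y => (lam ^ n)⁻¹ * u n y) hWb M hM1 hSem x
  have habs : |u n x| ≤ lam ^ n * (A * M ^ e) := by
    have : (lam ^ n)⁻¹ * |u n x| ≤ A * M ^ e := by
      rwa [abs_mul, abs_of_pos (inv_pos.mpr hlamn)] at hmain
    calc |u n x| = lam ^ n * ((lam ^ n)⁻¹ * |u n x|) := by field_simp
      _ ≤ lam ^ n * (A * M ^ e) := mul_le_mul_of_nonneg_left this hlamn.le
  have hMe : M ^ e ≤ 1 + X ^ e := by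
    rcases le_total X 1 with h | h
    · rw [hM_def, max_eq_left h, Real.one_rpow]
      have : 0 ≤ X ^ e := Real.rpow_nonneg hX0 e
      linarith
    · rw [hM_def, max_eq_right h]; linarith
  -- the key geometric bound
  have hτsq : τ * τ = lam ^ (1 - e) := by
    rw [hτ_def, ← Real.rpow_add hlam0]; ring_nf
  have hpow : (lam ^ n : ℝ) ^ (1 - e) = τ ^ n * τ ^ n := by
    rw [← Real.rpow_natCast lam n, ← Real.rpow_mul hlam0.le,
      mul_comm (n : ℝ) (1 - e), Real.rpow_mul hlam0.le, ← hτsq,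
      Real.rpow_natCast, mul_pow]
  have hXe : lam ^ n * X ^ e ≤ c₂ ^ e * C' * τ ^ n := by
    have hXval : X ^ e = c₂ ^ e * (n : ℝ) ^ (q * e) / (lam ^ n) ^ e := by
      rw [hX_def, Real.div_rpow (by positivity) hlamn.le,
        Real.mul_rpow hc₂.le hnq.le, Real.rpow_mul (by linarith : (0:ℝ) ≤ (n:ℝ))]
    have h2 : lam ^ n * X ^ e = c₂ ^ e * ((n : ℝ) ^ (q * e) * ((lam ^ n) ^ (1 - e) : ℝ)) := by
      rw [hXval, Real.rpow_sub hlamn, Real.rpow_one]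
      have h3 : ((lam ^ n : ℝ)) ^ e ≠ 0 := (Real.rpow_pos_of_pos hlamn e).ne'
      field_simp
    rw [h2, hpow]
    have hnk : (n : ℝ) ^ (q * e) ≤ (n : ℝ) ^ k := by
      rw [← Real.rpow_natCast (n : ℝ) k]
      exact Real.rpow_le_rpow_of_exponent_le hn1 (Nat.le_ceil _)
    have h4 : (n : ℝ) ^ (q * e) * (τ ^ n * τ ^ n) ≤ C' * τ ^ n := by
      have h5 : (n : ℝ) ^ (q * e) * τ ^ n ≤ C' :=
        le_trans (mul_le_mul_of_nonneg_right hnk (pow_pos hτ0 n).le) (hCb n)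
      calc (n : ℝ) ^ (q * e) * (τ ^ n * τ ^ n)
          = ((n : ℝ) ^ (q * e) * τ ^ n) * τ ^ n := by ring
        _ ≤ C' * τ ^ n := mul_le_mul_of_nonneg_right h5 (pow_pos hτ0 n).le
    calc c₂ ^ e * ((n : ℝ) ^ (q * e) * (τ ^ n * τ ^ n))
        ≤ c₂ ^ e * (C' * τ ^ n) :=
          mul_le_mul_of_nonneg_left h4 (Real.rpow_pos_of_pos hc₂ e).le
      _ = c₂ ^ e * C' * τ ^ n := by ring
  have hlt : lam ^ n ≤ τ ^ n := pow_le_pow_left₀ hlam0.le hlamτ n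
  calc |u n x| ≤ lam ^ n * (A * M ^ e) := habs
    _ ≤ lam ^ n * (A * (1 + X ^ e)) := by
        refine mul_le_mul_of_nonneg_left (mul_le_mul_of_nonneg_left hMe hA.le) hlamn.le
    _ = A * (lam ^ n + lam ^ n * X ^ e) := by ring
    _ ≤ A * (τ ^ n + c₂ ^ e * C' * τ ^ n) := by
        refine mul_le_mul_of_nonneg_left (add_le_add hlt hXe) hA.le
    _ = A * (1 + c₂ ^ e * C') * τ ^ n := by ring
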